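/- arXiv:1603.02221 — 5 statements merged into one kernel-verified Lean document; each statement's English description precedes it below -/
import Mathlib

section
/- For any finite poset S, any increasing function f : S → S, any up-set Γ ⊆ S, and any x, y ∈ S, the Euclidean inner product ⟨I_f, W^{Γ,x,y}⟩ is nonnegative, where I_f and W^{Γ,x,y} are the vectors in R^{S₂} defined below. -/
open Finset
open scoped Classical

/-- The vector `W^{Γ,x,y}` from the paper, as a function of coordinates `(v,z)`. -/
noncomputable def Wvec {S : Type*} [PartialOrder S] (Γ : Finset S) (x y v z : S) : ℝ :=
  if (x ≤ y ∧ y ∉ Γ ∧ v = y ∧ z ∈ Γ) ∨ (y ≤ x ∧ y ∈ Γ ∧ v = y ∧ z ∉ Γ) then 1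
  else if (x ≤ y ∧ y ∉ Γ ∧ v = x ∧ z ∈ Γ) ∨ (y ≤ x ∧ y ∈ Γ ∧ v = x ∧ z ∉ Γ) then -1
  else 0

/-- The vector `I_f` from the paper: `(I_f)_{x,y} = 1` iff `f x = y`. -/
noncomputable def Ivec {S : Type*} (f : S → S) (x y : S) : ℝ := if f x = y then 1 else 0

/-- `Γ` is an up-set: upward closed. -/
def IsUpSet {S : Type*} [Preorder S] (Γ : Finset S) : Prop :=
  ∀ a b : S, a ∈ Γ → a ≤ b → b ∈ Γ

/-- Euclidean inner product `⟨L, W^{Γ,x,y}⟩` over the off-diagonal coordinates `S₂`. -/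
noncomputable def dotW {S : Type*} [Fintype S] [PartialOrder S]
    (L : S → S → ℝ) (Γ : Finset S) (x y : S) : ℝ :=
  ∑ p ∈ Finset.univ.filter (fun p : S × S => p.1 ≠ p.2), L p.1 p.2 * Wvec Γ x y p.1 p.2

/-- `L` is (the off-diagonal part of) a monotone generator. -/
def IsMonGen {S : Type*} [Fintype S] [PartialOrder S] (L : S → S → ℝ) : Prop :=
  (∀ x y : S, x ≠ y → 0 ≤ L x y) ∧
    ∀ Γ : Finset S, IsUpSet Γ → ∀ x y : S, 0 ≤ dotW L Γ x y

/-- `L` is a completely monotone generator: a nonnegative combination of the `I_f`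
over increasing maps `f`. -/
def IsCMonGen {S : Type*} [Fintype S] [PartialOrder S] (L : S → S → ℝ) : Prop :=
  ∃ Λ : (S → S) → ℝ, (∀ f, 0 ≤ Λ f) ∧ (∀ f, ¬ Monotone f → Λ f = 0) ∧
    ∀ x y : S, x ≠ y → L x y = ∑ f : S → S, Λ f * Ivec f x y

/-- `⟨I_f, W^{Γ,x,y}⟩ ≥ 0` for increasing `f`, up-set `Γ`, and `x, y ∈ S`. -/
theorem inner_Ivec_Wvec_nonneg {S : Type*} [Fintype S] [PartialOrder S]
    (f : S → S) (hf : Monotone f) (Γ : Finset S) (hΓ : IsUpSet Γ) (x y : S) :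
    0 ≤ ∑ p ∈ Finset.univ.filter (fun p : S × S => p.1 ≠ p.2),
        Ivec f p.1 p.2 * Wvec Γ x y p.1 p.2 := by
  classical
  have hsub : (Finset.filter (fun p : S × S => p.1 ≠ p.2)
      ({(y, f y), (x, f x)} : Finset (S × S))) ⊆
      Finset.univ.filter (fun p : S × S => p.1 ≠ p.2) := by
    intro p hp
    simp only [Finset.mem_filter] at hp ⊢
    exact ⟨Finset.mem_univ _, hp.2⟩
  have hzero : ∀ p ∈ Finset.univ.filter (fun p : S × S => p.1 ≠ p.2),
      p ∉ Finset.filter (fun p : S × S => p.1 ≠ p.2)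
        ({(y, f y), (x, f x)} : Finset (S × S)) →
        Ivec f p.1 p.2 * Wvec Γ x y p.1 p.2 = 0 := by
    intro p hp hps
    have hp' : p.1 ≠ p.2 := (Finset.mem_filter.mp hp).2
    by_cases hfp : f p.1 = p.2
    · have hne1 : p ≠ (y, f y) := by
        intro h
        exact hps (Finset.mem_filter.mpr ⟨by simp [h], hp'⟩)
      have hne2 : p ≠ (x, f x) := by
        intro h
        exact hps (Finset.mem_filter.mpr ⟨by simp [h], hp'⟩)
      have hy : p.1 ≠ y := fun h => hne1 (Prod.ext h (by rw [← hfp, h]))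
      have hx : p.1 ≠ x := fun h => hne2 (Prod.ext h (by rw [← hfp, h]))
      have : Wvec Γ x y p.1 p.2 = 0 := by
        unfold Wvec
        split_ifs with h1 h2
        · rcases h1 with ⟨_, _, h, _⟩ | ⟨_, _, h, _⟩ <;> exact absurd h hy
        · rcases h2 with ⟨_, _, h, _⟩ | ⟨_, _, h, _⟩ <;> exact absurd h hx
        · rfl
      rw [this, mul_zero]
    · have : Ivec f p.1 p.2 = 0 := by unfold Ivec; rw [if_neg hfp]
      rw [this, zero_mul]
  rw [← Finset.sum_subset hsub hzero, Finset.sum_filter]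
  by_cases heq : ((y, f y) : S × S) = (x, f x)
  · have hxy : y = x := (Prod.mk.injEq _ _ _ _ ▸ heq : _ ∧ _).1
    subst hxy
    rw [show ({((y : S), f y), (y, f y)} : Finset (S × S)) = {(y, f y)} by simp,
      Finset.sum_singleton]
    split_ifs with h
    · have hI : Ivec f y (f y) = 1 := by unfold Ivec; rw [if_pos rfl]
      rw [hI, one_mul]
      unfold Wvec
      split_ifs with h1 <;> norm_num
    · exact le_refl 0
  · rw [Finset.sum_pair heq]
    have hIy : Ivec f y (f y) = 1 := by unfold Ivec; rw [if_pos rfl]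
    have hIx : Ivec f x (f x) = 1 := by unfold Ivec; rw [if_pos rfl]
    by_cases hx1 : x ≤ y
    · by_cases hyΓ : y ∈ Γ
      · by_cases hyx : y ≤ x
        · exact absurd (Prod.ext (le_antisymm hyx hx1)
            (by rw [le_antisymm hyx hx1])) heq
        · have hW : ∀ v z : S, Wvec Γ x y v z = 0 := by
            intro v z
            unfold Wvec
            split_ifs with h1 h2
            · rcases h1 with ⟨_, h, _⟩ | ⟨h, _⟩ <;> [exact absurd hyΓ h; exact absurd h hyx]
            · rcases h2 with ⟨_, h, _⟩ | ⟨h, _⟩ <;> [exact absurd hyΓ h; exact absurd h hyx]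
            · rfl
          rw [hW, hW]
          simp
      · -- x ≤ y, y ∉ Γ
        by_cases hfxΓ : f x ∈ Γ
        · have hfyΓ : f y ∈ Γ := hΓ _ _ hfxΓ (hf hx1)
          have hfyy : y ≠ f y := fun h => hyΓ (h ▸ hfyΓ)
          have hWy : Wvec Γ x y y (f y) = 1 := by
            unfold Wvec
            split_ifs with h1
            · rfl
            all_goals exact absurd (Or.inl ⟨hx1, hyΓ, rfl, hfyΓ⟩) h1
          have hWx : -1 ≤ Wvec Γ x y x (f x) := by
            unfold Wvec
            split_ifs <;> norm_num
          rw [if_pos hfyy, hIy, hWy, one_mul]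
          split_ifs with h
          · rw [hIx, one_mul]
            linarith only [hWx]
          · norm_num
        · have hWx : Wvec Γ x y x (f x) = 0 := by
            unfold Wvec
            split_ifs with h1 h2
            · rcases h1 with ⟨_, _, _, h⟩ | ⟨_, h, _⟩ <;>
                [exact absurd h hfxΓ; exact absurd h hyΓ]
            · rcases h2 with ⟨_, _, _, h⟩ | ⟨_, h, _⟩ <;>
                [exact absurd h hfxΓ; exact absurd h hyΓ]
            · rfl
          have hWy : 0 ≤ Wvec Γ x y y (f y) := by
            unfold Wvec
            split_ifs with h1 h2
            · norm_num
            · rcases h2 with ⟨_, _, hv, _⟩ | ⟨_, h, _⟩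
              · exact absurd (Prod.ext hv (by rw [hv])) heq
              · exact absurd h hyΓ
            · norm_num
          rw [hWx, mul_zero]
          split_ifs with h1 h2 h3
          · rw [hIy, one_mul]; linarith only [hWy]
          · rw [hIy, one_mul]; linarith only [hWy]
          · norm_num
          · norm_num
    · by_cases hyx : y ≤ x
      · by_cases hyΓ : y ∈ Γ
        · -- y ≤ x, y ∈ Γ
          by_cases hfxΓ : f x ∈ Γ
          · have hWx : Wvec Γ x y x (f x) = 0 := by
              unfold Wvec
              split_ifs with h1 h2
              · rcases h1 with ⟨h, _⟩ | ⟨_, _, _, h⟩ <;>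
                  [exact absurd h hx1; exact absurd hfxΓ h]
              · rcases h2 with ⟨h, _⟩ | ⟨_, _, _, h⟩ <;>
                  [exact absurd h hx1; exact absurd hfxΓ h]
              · rfl
            have hWy : 0 ≤ Wvec Γ x y y (f y) := by
              unfold Wvec
              split_ifs with h1 h2
              · norm_num
              · rcases h2 with ⟨h, _⟩ | ⟨_, _, hv, _⟩
                · exact absurd h hx1
                · exact absurd (Prod.ext hv (by rw [hv])) heq
              · norm_num
            rw [hWx, mul_zero]
            split_ifs with h1 h2 h3
            · rw [hIy, one_mul]; linarith only [hWy]
            · rw [hIy, one_mul]; linarith only [hWy]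
            · norm_num
            · norm_num
          · have hfyΓ : f y ∉ Γ := fun h => hfxΓ (hΓ _ _ h (hf hyx))
            have hfyy : y ≠ f y := fun h => hfyΓ (h ▸ hyΓ)
            have hWy : Wvec Γ x y y (f y) = 1 := by
              unfold Wvec
              split_ifs with h1
              · rfl
              all_goals exact absurd (Or.inr ⟨hyx, hyΓ, rfl, hfyΓ⟩) h1
            have hWx : -1 ≤ Wvec Γ x y x (f x) := by
              unfold Wvec
              split_ifs <;> norm_num
            rw [if_pos hfyy, hIy, hWy, one_mul]
            split_ifs with h
            · rw [hIx, one_mul]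
              linarith only [hWx]
            · norm_num
        · have hW : ∀ v z : S, Wvec Γ x y v z = 0 := by
            intro v z
            unfold Wvec
            split_ifs with h1 h2
            · rcases h1 with ⟨h, _⟩ | ⟨_, h, _⟩ <;> [exact absurd h hx1; exact absurd h hyΓ]
            · rcases h2 with ⟨h, _⟩ | ⟨_, h, _⟩ <;> [exact absurd h hx1; exact absurd h hyΓ]
            · rfl
          rw [hW, hW]
          simp
      · have hW : ∀ v z : S, Wvec Γ x y v z = 0 := by
          intro v z
          unfold Wvec
          split_ifs with h1 h2
          · rcases h1 with ⟨h, _⟩ | ⟨h, _⟩ <;> [exact absurd h hx1; exact absurd h hyx]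
          · rcases h2 with ⟨h, _⟩ | ⟨h, _⟩ <;> [exact absurd h hx1; exact absurd h hyx]
          · rfl
        rw [hW, hW]
        simp
end

section
/- The set of completely monotone generators G_{c.mon} is contained in the set of monotone generators G_{mon}: if L ∈ (R⁺)^{S₂} can be written as a nonnegative linear combination L = Σ_{f ∈ M} Λ_f I_f over increasing functions f : S → S with Λ_f ≥ 0, then ⟨L, W^{Γ,x,y}⟩ ≥ 0 for every up-set Γ and all x, y ∈ S. -/
open Finset
open scoped Classical

set_option maxHeartbeats 1600000 in
lemma key {S : Type*} [Fintype S] [PartialOrder S] {f : S → S} (hf : Monotone f)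
    {Γ : Finset S} (hΓ : IsUpSet Γ) (x y : S) : 0 ≤ dotW (Ivec f) Γ x y := by
  by_cases hxy : x = y
  · subst hxy
    apply Finset.sum_nonneg
    intro p _
    apply mul_nonneg
    · unfold Ivec; split_ifs <;> norm_num
    · unfold Wvec; split_ifs <;> norm_num
  · have hne : ((x, f x) : S × S) ≠ (y, f y) := by simp [hxy]
    have hsum : dotW (Ivec f) Γ x y =
        (if x ≠ f x then Ivec f x (f x) * Wvec Γ x y x (f x) else 0)
        + (if y ≠ f y then Ivec f y (f y) * Wvec Γ x y y (f y) else 0) := by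
      rw [dotW, Finset.sum_filter]
      rw [← Finset.sum_subset (Finset.subset_univ ({(x, f x), (y, f y)} : Finset (S × S)))]
      · rw [Finset.sum_pair hne]
      · intro p _ hp
        simp only [Finset.mem_insert, Finset.mem_singleton] at hp
        push_neg at hp
        obtain ⟨h1, h2⟩ := hp
        split_ifs with h
        · rcases eq_or_ne p.1 x with hx | hx
          · have hIv : f p.1 ≠ p.2 := fun h' =>
              h1 (Prod.ext_iff.mpr ⟨hx, by rw [← h', hx]⟩)
            simp [Ivec, hIv]
          rcases eq_or_ne p.1 y with hy | hy
          · have hIv : f p.1 ≠ p.2 := fun h' =>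
              h2 (Prod.ext_iff.mpr ⟨hy, by rw [← h', hy]⟩)
            simp [Ivec, hIv]
          · have : Wvec Γ x y p.1 p.2 = 0 := by
              unfold Wvec
              split_ifs with w1 w2
              · exfalso; rcases w1 with ⟨_,_,h,_⟩|⟨_,_,h,_⟩ <;> exact hy h
              · exfalso; rcases w2 with ⟨_,_,h,_⟩|⟨_,_,h,_⟩ <;> exact hx h
              · rfl
            simp [this]
        · rfl
    rw [hsum]
    have Ix : Ivec f x (f x) = 1 := by simp [Ivec]
    have Iy : Ivec f y (f y) = 1 := by simp [Ivec]
    rw [Ix, Iy]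
    by_cases hle : x ≤ y
    · have hnyx : ¬ y ≤ x := fun h => hxy (le_antisymm hle h)
      by_cases hyG : y ∈ Γ
      · have w1 : Wvec Γ x y x (f x) = 0 := by
          rw [Wvec, if_neg, if_neg] <;>
            · rintro (⟨_, h, _, _⟩ | ⟨h, _, _, _⟩)
              exacts [h hyG, hnyx h]
        have w2 : Wvec Γ x y y (f y) = 0 := by
          rw [Wvec, if_neg, if_neg] <;>
            · rintro (⟨_, h, _, _⟩ | ⟨h, _, _, _⟩)
              exacts [h hyG, hnyx h]
        rw [w1, w2]; split_ifs <;> norm_num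
      · have hup : f x ∈ Γ → f y ∈ Γ := fun h => hΓ _ _ h (hf hle)
        have hupy : f x ∈ Γ → y ≠ f y := fun h h' => hyG (h' ▸ hup h)
        have w1 : Wvec Γ x y x (f x) = (if f x ∈ Γ then -1 else 0) := by
          rw [Wvec, if_neg (by rintro (⟨_, _, h, _⟩ | ⟨h, _, _, _⟩); exacts [hxy h, hnyx h])]
          by_cases hfx : f x ∈ Γ
          · rw [if_pos (Or.inl ⟨hle, hyG, rfl, hfx⟩), if_pos hfx]
          · rw [if_neg, if_neg hfx]
            rintro (⟨_, _, _, h⟩ | ⟨h, _, _, _⟩); exacts [hfx h, hnyx h]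
        have w2 : Wvec Γ x y y (f y) = (if f y ∈ Γ then 1 else 0) := by
          rw [Wvec]
          by_cases hfy : f y ∈ Γ
          · rw [if_pos (Or.inl ⟨hle, hyG, rfl, hfy⟩), if_pos hfy]
          · rw [if_neg, if_neg, if_neg hfy]
            · rintro (⟨_, _, h, _⟩ | ⟨h, _, _, _⟩); exacts [hxy h.symm, hnyx h]
            · rintro (⟨_, _, _, h⟩ | ⟨h, _, _, _⟩); exacts [hfy h, hnyx h]
        rw [w1, w2]
        split_ifs <;>
          first
            | exact absurd (hup ‹f x ∈ Γ›) ‹f y ∉ Γ›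
            | exact absurd (hupy ‹f x ∈ Γ›) ‹¬y ≠ f y›
            | norm_num
    · by_cases hyx : y ≤ x
      · by_cases hyG : y ∈ Γ
        · have hup : f y ∈ Γ → f x ∈ Γ := fun h => hΓ _ _ h (hf hyx)
          have hupy : f x ∉ Γ → y ≠ f y := fun h h' => h (hup (h' ▸ hyG))
          have hupy2 : f x ∉ Γ → f y ∉ Γ := fun h h' => h (hup h')
          have w1 : Wvec Γ x y x (f x) = (if f x ∉ Γ then -1 else 0) := by
            rw [Wvec, if_neg (by rintro (⟨h, _, _, _⟩ | ⟨_, _, h, _⟩); exacts [hle h, hxy h])]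
            by_cases hfx : f x ∈ Γ
            · rw [if_neg, if_neg (not_not.mpr hfx)]
              rintro (⟨h, _, _, _⟩ | ⟨_, _, _, h⟩); exacts [hle h, h hfx]
            · rw [if_pos (Or.inr ⟨hyx, hyG, rfl, hfx⟩), if_pos hfx]
          have w2 : Wvec Γ x y y (f y) = (if f y ∉ Γ then 1 else 0) := by
            rw [Wvec]
            by_cases hfy : f y ∈ Γ
            · rw [if_neg, if_neg, if_neg (not_not.mpr hfy)]
              · rintro (⟨h, _, _, _⟩ | ⟨_, _, h, _⟩); exacts [hle h, hxy h.symm]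
              · rintro (⟨h, _, _, _⟩ | ⟨_, _, _, h⟩); exacts [hle h, h hfy]
            · rw [if_pos (Or.inr ⟨hyx, hyG, rfl, hfy⟩), if_pos hfy]
          rw [w1, w2]
          split_ifs <;>
            first
              | exact absurd (hupy ‹f x ∉ Γ›) ‹¬y ≠ f y›
              | exact absurd (hupy2 ‹f x ∉ Γ›) ‹f y ∈ Γ›
              | exact absurd ‹f y ∈ Γ› (hupy2 ‹f x ∉ Γ›)
              | norm_num
        · have w1 : Wvec Γ x y x (f x) = 0 := by
            rw [Wvec, if_neg, if_neg] <;>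
              · rintro (⟨h, _, _, _⟩ | ⟨_, h, _, _⟩)
                exacts [hle h, hyG h]
          have w2 : Wvec Γ x y y (f y) = 0 := by
            rw [Wvec, if_neg, if_neg] <;>
              · rintro (⟨h, _, _, _⟩ | ⟨_, h, _, _⟩)
                exacts [hle h, hyG h]
          rw [w1, w2]; split_ifs <;> norm_num
      · have w1 : Wvec Γ x y x (f x) = 0 := by
          rw [Wvec, if_neg, if_neg] <;>
            · rintro (⟨h, _, _, _⟩ | ⟨h, _, _, _⟩)
              exacts [hle h, hyx h]
        have w2 : Wvec Γ x y y (f y) = 0 := by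
          rw [Wvec, if_neg, if_neg] <;>
            · rintro (⟨h, _, _, _⟩ | ⟨h, _, _, _⟩)
              exacts [hle h, hyx h]
        rw [w1, w2]; split_ifs <;> norm_num

/-- completely monotone generators are monotone. -/
theorem cmon_subset_mon {S : Type*} [Fintype S] [PartialOrder S]
    (L : S → S → ℝ) (Λ : (S → S) → ℝ) (hΛ : ∀ f, 0 ≤ Λ f)
    (hΛmon : ∀ f, ¬ Monotone f → Λ f = 0)
    (hL : ∀ x y : S, x ≠ y → L x y = ∑ f : S → S, Λ f * Ivec f x y) :
    ∀ Γ : Finset S, IsUpSet Γ → ∀ x y : S, 0 ≤ dotW L Γ x y := by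
  intro Γ hΓ x y
  have hrw : dotW L Γ x y = ∑ f : S → S, Λ f * dotW (Ivec f) Γ x y := by
    rw [dotW]
    have hcongr : ∀ p ∈ Finset.univ.filter (fun p : S × S => p.1 ≠ p.2),
        L p.1 p.2 * Wvec Γ x y p.1 p.2
          = ∑ f : S → S, Λ f * (Ivec f p.1 p.2 * Wvec Γ x y p.1 p.2) := by
      intro p hp
      rw [hL p.1 p.2 (Finset.mem_filter.mp hp).2, Finset.sum_mul]
      exact Finset.sum_congr rfl fun f _ => mul_assoc _ _ _
    rw [Finset.sum_congr rfl hcongr, Finset.sum_comm]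
    exact Finset.sum_congr rfl fun f _ => by rw [dotW, Finset.mul_sum]
  rw [hrw]
  apply Finset.sum_nonneg
  intro f _
  by_cases hm : Monotone f
  · exact mul_nonneg (hΛ f) (key hm hΓ x y)
  · simp [hΛmon f hm]
end

section
/- On the five-point poset P₁ (the diamond a < b, a < c, b < d, c < d augmented with a bottom element w < a), the generator L₁ defined by L_{a,w} = L_{b,w} = L_{c,w} = L_{d,b} = L_{d,c} = 1 and all other off-diagonal entries 0 satisfies ⟨L₁, W^{Γ,x,y}⟩ ≥ 0 for every up-set Γ and all x ≤ y or x ≥ y in P₁, i.e. L₁ is a monotone generator. -/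
open Finset
open scoped Classical

/-- The five-point poset `P₁`: diamond `a < b,c < d` with bottom element `w < a`. -/
inductive P1 | w | a | b | c | d
  deriving DecidableEq

instance : Fintype P1 :=
  ⟨⟨↑[P1.w, .a, .b, .c, .d], by decide⟩, fun x => by cases x <;> decide⟩

/-- Order on `P₁`, generated by the covering relations `w<a, a<b, a<c, b<d, c<d`. -/
def P1.ble : P1 → P1 → Bool
  | .w, _ => true
  | .a, .a | .a, .b | .a, .c | .a, .d => true
  | .b, .b | .b, .d => true
  | .c, .c | .c, .d => true
  | .d, .d => true
  | _, _ => false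

instance : LE P1 := ⟨fun x y => P1.ble x y⟩
instance : DecidableRel (α := P1) (· ≤ ·) :=
  fun x y => inferInstanceAs (Decidable (P1.ble x y = true))

instance : PartialOrder P1 where
  le_refl := by decide
  le_trans := by decide
  le_antisymm := by decide

/-- The generator `L₁` on `P₁`: rates `L_{a,w}=L_{b,w}=L_{c,w}=L_{d,b}=L_{d,c}=1`. -/
noncomputable def L1 : P1 → P1 → ℝ := fun x y =>
  if (x = .a ∧ y = .w) ∨ (x = .b ∧ y = .w) ∨ (x = .c ∧ y = .w) ∨
     (x = .d ∧ y = .b) ∨ (x = .d ∧ y = .c) then 1 else 0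

lemma P1.le_iff (x y : P1) : x ≤ y ↔ P1.ble x y = true := Iff.rfl

/-- Integer/Bool version of `Wvec` on `P₁` (computable, Γ as a Bool predicate). -/
def WvecZ (g : P1 → Bool) (x y v z : P1) : ℤ :=
  if (P1.ble x y = true ∧ g y = false ∧ v = y ∧ g z = true) ∨
     (P1.ble y x = true ∧ g y = true ∧ v = y ∧ g z = false) then 1
  else if (P1.ble x y = true ∧ g y = false ∧ v = x ∧ g z = true) ∨
     (P1.ble y x = true ∧ g y = true ∧ v = x ∧ g z = false) then -1
  else 0

/-- Integer version of `L1` (computable). -/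
def L1Z : P1 → P1 → ℤ := fun x y =>
  if (x = .a ∧ y = .w) ∨ (x = .b ∧ y = .w) ∨ (x = .c ∧ y = .w) ∨
     (x = .d ∧ y = .b) ∨ (x = .d ∧ y = .c) then 1 else 0

/-- Integer version of `dotW L1` (computable), summed over all pairs. -/
def dotWZ (g : P1 → Bool) (x y : P1) : ℤ :=
  ∑ p : P1 × P1, L1Z p.1 p.2 * WvecZ g x y p.1 p.2

lemma L1Z_diag (u : P1) : L1Z u u = 0 := by cases u <;> rfl

lemma Wvec_cast (Γ : Finset P1) (x y v z : P1) :
    Wvec Γ x y v z = ((WvecZ (fun t => decide (t ∈ Γ)) x y v z : ℤ) : ℝ) := by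
  unfold Wvec WvecZ
  simp only [decide_eq_true_eq, decide_eq_false_iff_not, P1.le_iff]
  split_ifs <;> norm_num

lemma L1_cast (u v : P1) : L1 u v = ((L1Z u v : ℤ) : ℝ) := by
  unfold L1 L1Z
  split_ifs <;> norm_num

lemma dotW_cast (Γ : Finset P1) (x y : P1) :
    dotW L1 Γ x y = ((dotWZ (fun t => decide (t ∈ Γ)) x y : ℤ) : ℝ) := by
  rw [dotW, Finset.sum_filter, dotWZ]
  push_cast
  refine Finset.sum_congr rfl fun p _ => ?_
  obtain ⟨u, v⟩ := p
  by_cases h : u = v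
  · subst h
    simp [L1Z_diag]
  · rw [if_pos h, L1_cast, Wvec_cast]

lemma dotWZ_nonneg : ∀ g : P1 → Bool,
    (∀ a b : P1, g a = true → P1.ble a b = true → g b = true) →
    ∀ x y : P1, 0 ≤ dotWZ g x y := by decide

/-- `L₁` is a monotone generator on `P₁`. -/
theorem L1_monotone :
    ∀ Γ : Finset P1, IsUpSet Γ → ∀ x y : P1, (x ≤ y ∨ y ≤ x) →
      0 ≤ dotW L1 Γ x y := by
  intro Γ hΓ x y _
  rw [dotW_cast]
  have hg : ∀ a b : P1, decide (a ∈ Γ) = true → P1.ble a b = true →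
      decide (b ∈ Γ) = true := by
    intro a b ha hab
    exact decide_eq_true (hΓ a b (of_decide_eq_true ha) hab)
  exact_mod_cast dotWZ_nonneg _ hg x y
end

section
/- On the four-point bowtie poset B = {a, b, c, d} with a < c, a < d, b < c, b < d (a, b incomparable and c, d incomparable), every monotone generator is completely monotone: the cone {L ∈ (R⁺)^{S₂} : ⟨L, W^{Γ,x,y}⟩ ≥ 0 for all up-sets Γ and x, y ∈ B} equals the cone of nonnegative combinations of the vectors I_f over increasing maps f : B → B. -/
open Finset
open scoped Classical

/-- The four-point bowtie poset: minimal `a, b`, each below the maximal `c, d`. -/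
inductive B | a | b | c | d
  deriving DecidableEq

instance : Fintype B :=
  ⟨⟨{B.a, B.b, B.c, B.d}, by decide⟩, fun x => by cases x <;> decide⟩

def B.ble : B → B → Bool
  | .a, .a | .a, .c | .a, .d => true
  | .b, .b | .b, .c | .b, .d => true
  | .c, .c => true
  | .d, .d => true
  | _, _ => false

instance : LE B := ⟨fun x y => B.ble x y⟩
instance : DecidableRel (α := B) (· ≤ ·) :=
  fun x y => inferInstanceAs (Decidable (B.ble x y = true))

instance : PartialOrder B where
  le_refl := by decide
  le_trans := by decide
  le_antisymm := by decide

private lemma sum_univ_congr' {α M : Type*} [AddCommMonoid M] (i1 i2 : Fintype α) (g : α → M) :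
    @Finset.sum α M _ (@Finset.univ α i1) g = @Finset.sum α M _ (@Finset.univ α i2) g := by
  rw [Subsingleton.elim i1 i2]

private lemma sum_univ_B (g : B → ℝ) : ∑ x : B, g x = g B.a + g B.b + g B.c + g B.d := by
  rw [show (Finset.univ : Finset B) = {B.a, B.b, B.c, B.d} from rfl]
  simp [Finset.sum_insert, Finset.mem_insert]; ring

/-- Build a function `B → B` from its four values. -/
def mkf (fa fb fc fd : B) : B → B := fun x => match x with
  | .a => fa | .b => fb | .c => fc | .d => fd

private lemma mono_of_dec (g : B → B) (h : ∀ u v : B, u ≤ v → g u ≤ g v) : Monotone g :=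
  fun _ _ huv => h _ _ huv

private lemma sum_ind_mul (g : B → B) (c : ℝ) (x y : B) :
    ∑ f : B → B, (if f = g then c else 0) * Ivec f x y = c * Ivec g x y := by
  simp only [ite_mul, zero_mul, Finset.sum_ite_eq', Finset.mem_univ, if_true]

private lemma ite_nn {c : Prop} [Decidable c] {r : ℝ} (h : 0 ≤ r) : 0 ≤ if c then r else 0 := by
  split_ifs <;> simp [h]

/-- The coefficient function for the decomposition. -/
noncomputable def lam (L : B → B → ℝ) (f : B → B) : ℝ :=
    (if f = mkf .d .d .d .d then min (L B.a B.d) (L B.b B.d) else 0) +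
    (if f = mkf .d .b .d .d then L B.a B.d - min (L B.a B.d) (L B.b B.d) else 0) +
    (if f = mkf .a .d .d .d then L B.b B.d - min (L B.a B.d) (L B.b B.d) else 0) +
    (if f = mkf .a .b .d .d then L B.c B.d - max (L B.a B.d) (L B.b B.d) else 0) +
    (if f = mkf .c .c .c .c then min (L B.a B.c) (L B.b B.c) else 0) +
    (if f = mkf .c .b .c .c then L B.a B.c - min (L B.a B.c) (L B.b B.c) else 0) +
    (if f = mkf .a .c .c .c then L B.b B.c - min (L B.a B.c) (L B.b B.c) else 0) +
    (if f = mkf .a .b .c .c then L B.d B.c - max (L B.a B.c) (L B.b B.c) else 0) +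
    (if f = mkf .b .b .b .b then min (L B.c B.b) (L B.d B.b) else 0) +
    (if f = mkf .b .b .b .d then L B.c B.b - min (L B.c B.b) (L B.d B.b) else 0) +
    (if f = mkf .b .b .c .b then L B.d B.b - min (L B.c B.b) (L B.d B.b) else 0) +
    (if f = mkf .b .b .c .d then L B.a B.b - max (L B.c B.b) (L B.d B.b) else 0) +
    (if f = mkf .a .a .a .a then min (L B.c B.a) (L B.d B.a) else 0) +
    (if f = mkf .a .a .a .d then L B.c B.a - min (L B.c B.a) (L B.d B.a) else 0) +
    (if f = mkf .a .a .c .a then L B.d B.a - min (L B.c B.a) (L B.d B.a) else 0) +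
    (if f = mkf .a .a .c .d then L B.b B.a - max (L B.c B.a) (L B.d B.a) else 0)

private lemma lam_sum (L : B → B → ℝ) (x y : B) (hxy : x ≠ y) :
    L x y = ∑ f : B → B, lam L f * Ivec f x y := by
  simp only [lam, add_mul, Finset.sum_add_distrib, sum_ind_mul]
  have m1 := min_add_max (L B.a B.d) (L B.b B.d)
  have m2 := min_add_max (L B.a B.c) (L B.b B.c)
  have m3 := min_add_max (L B.c B.b) (L B.d B.b)
  have m4 := min_add_max (L B.c B.a) (L B.d B.a)
  rcases x <;> rcases y <;>
    first
      | exact absurd rfl hxy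
      | (norm_num (config := { decide := true }) [Ivec, mkf]; try linarith)

private lemma dotW_eq (L : B → B → ℝ) (Γ : Finset B) (x y : B) :
    dotW L Γ x y = ∑ v : B, ∑ z : B, if v ≠ z then L v z * Wvec Γ x y v z else 0 := by
  simp only [dotW, Finset.sum_filter, Fintype.sum_prod_type]

private lemma dotW_Ivec_nonneg (f : B → B) (hf : Monotone f) (Γ : Finset B)
    (hΓ : IsUpSet Γ) (x y : B) : 0 ≤ dotW (Ivec f) Γ x y := by
  rw [dotW_eq]
  have hinner : ∀ v : B, (∑ z : B, if v ≠ z then Ivec f v z * Wvec Γ x y v z else 0)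
      = if v ≠ f v then Wvec Γ x y v (f v) else 0 := by
    intro v
    rw [show (∑ z : B, if v ≠ z then Ivec f v z * Wvec Γ x y v z else 0)
        = ∑ z : B, if z = f v then (if v ≠ z then Wvec Γ x y v z else 0) else 0 from
      Finset.sum_congr rfl fun z _ => by
        by_cases h : z = f v <;> by_cases h2 : v ≠ z <;> simp [Ivec, h, h2] <;> tauto]
    rw [Finset.sum_ite_eq' Finset.univ (f v) (fun z => if v ≠ z then Wvec Γ x y v z else 0)]
    simp
  simp only [hinner]
  have hzero : ∀ v : B, v ≠ x → v ≠ y →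
      (if v ≠ f v then Wvec Γ x y v (f v) else 0) = 0 := by
    intro v hvx hvy
    simp [Wvec, hvx, hvy]
  rw [show (∑ v : B, if v ≠ f v then Wvec Γ x y v (f v) else 0)
      = ∑ v ∈ ({x, y} : Finset B), (if v ≠ f v then Wvec Γ x y v (f v) else 0) from
    (Finset.sum_subset (Finset.subset_univ _) (fun v _ hv => by
      simp only [Finset.mem_insert, Finset.mem_singleton] at hv
      push_neg at hv
      exact hzero v hv.1 hv.2)).symm]
  by_cases hxy : x = y
  · subst hxy
    simp only [Finset.insert_eq_self.mpr (Finset.mem_singleton_self x),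
      Finset.sum_singleton]
    unfold Wvec
    split_ifs with h1 h2 h3 <;> first | norm_num | exact absurd h3 h2
  · rw [Finset.sum_pair hxy]
    by_cases hxley : x ≤ y
    · have hnyx : ¬ y ≤ x := fun h => hxy (le_antisymm hxley h)
      by_cases hyG : y ∈ Γ
      · simp [Wvec, hyG, hnyx]
      · have wx : Wvec Γ x y x (f x) = if f x ∈ Γ then -1 else 0 := by
          simp [Wvec, hxley, hyG, hnyx, hxy]
        have wy : Wvec Γ x y y (f y) = if f y ∈ Γ then 1 else 0 := by
          simp [Wvec, hxley, hyG, hnyx, Ne.symm hxy]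
        rw [wx, wy]
        by_cases hfx : f x ∈ Γ
        · have hfy : f y ∈ Γ := hΓ _ _ hfx (hf hxley)
          have hyfy : y ≠ f y := fun h => hyG (h ▸ hfy)
          simp only [hfx, hfy, if_true, hyfy]
          split_ifs <;> norm_num
        · simp only [hfx, if_false]
          split_ifs <;> norm_num
    · by_cases hylex : y ≤ x
      · by_cases hyG : y ∈ Γ
        · have wx : Wvec Γ x y x (f x) = if f x ∉ Γ then -1 else 0 := by
            simp [Wvec, hxley, hyG, hylex, hxy]
          have wy : Wvec Γ x y y (f y) = if f y ∉ Γ then 1 else 0 := by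
            simp [Wvec, hxley, hyG, hylex, Ne.symm hxy]
          rw [wx, wy]
          by_cases hfx : f x ∈ Γ
          · simp only [hfx, not_true, if_false]
            split_ifs <;> norm_num
          · have hfy : f y ∉ Γ := fun h => hfx (hΓ _ _ h (hf hylex))
            have hyfy : y ≠ f y := fun h => hfy (h ▸ hyG)
            simp only [hfx, hfy, not_false_iff, if_true, hyfy]
            split_ifs <;> norm_num
        · simp [Wvec, hyG, hxley]
      · simp [Wvec, hxley, hylex]

/-- on the four-point bowtie, the cone of monotone generators equals
the cone of completely monotone generators. -/
theorem bowtie_mon_eq_cmon :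
    {L : B → B → ℝ | IsMonGen L} = {L : B → B → ℝ | IsCMonGen L} := by
  ext L
  simp only [Set.mem_setOf_eq]
  constructor
  · rintro ⟨h0, h⟩
    have hcd_ad : L B.a B.d ≤ L B.c B.d := by
      have h1 := h {B.d} (by unfold IsUpSet; decide) B.a B.c
      simp only [dotW, Finset.sum_filter, Fintype.sum_prod_type, sum_univ_B, Wvec] at h1
      norm_num (config := { decide := true }) at h1; linarith
    have hcd_bd : L B.b B.d ≤ L B.c B.d := by
      have h1 := h {B.d} (by unfold IsUpSet; decide) B.b B.c
      simp only [dotW, Finset.sum_filter, Fintype.sum_prod_type, sum_univ_B, Wvec] at h1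
      norm_num (config := { decide := true }) at h1; linarith
    have hdc_ac : L B.a B.c ≤ L B.d B.c := by
      have h1 := h {B.c} (by unfold IsUpSet; decide) B.a B.d
      simp only [dotW, Finset.sum_filter, Fintype.sum_prod_type, sum_univ_B, Wvec] at h1
      norm_num (config := { decide := true }) at h1; linarith
    have hdc_bc : L B.b B.c ≤ L B.d B.c := by
      have h1 := h {B.c} (by unfold IsUpSet; decide) B.b B.d
      simp only [dotW, Finset.sum_filter, Fintype.sum_prod_type, sum_univ_B, Wvec] at h1
      norm_num (config := { decide := true }) at h1; linarith
    have hab_cb : L B.c B.b ≤ L B.a B.b := by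
      have h1 := h {B.a, B.c, B.d} (by unfold IsUpSet; decide) B.c B.a
      simp only [dotW, Finset.sum_filter, Fintype.sum_prod_type, sum_univ_B, Wvec] at h1
      norm_num (config := { decide := true }) at h1; linarith
    have hab_db : L B.d B.b ≤ L B.a B.b := by
      have h1 := h {B.a, B.c, B.d} (by unfold IsUpSet; decide) B.d B.a
      simp only [dotW, Finset.sum_filter, Fintype.sum_prod_type, sum_univ_B, Wvec] at h1
      norm_num (config := { decide := true }) at h1; linarith
    have hba_ca : L B.c B.a ≤ L B.b B.a := by
      have h1 := h {B.b, B.c, B.d} (by unfold IsUpSet; decide) B.c B.b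
      simp only [dotW, Finset.sum_filter, Fintype.sum_prod_type, sum_univ_B, Wvec] at h1
      norm_num (config := { decide := true }) at h1; linarith
    have hba_da : L B.d B.a ≤ L B.b B.a := by
      have h1 := h {B.b, B.c, B.d} (by unfold IsUpSet; decide) B.d B.b
      simp only [dotW, Finset.sum_filter, Fintype.sum_prod_type, sum_univ_B, Wvec] at h1
      norm_num (config := { decide := true }) at h1; linarith
    refine ⟨lam L, ?_, ?_, fun x y hxy => (lam_sum L x y hxy).trans (sum_univ_congr' _ _ _)⟩
    · intro f
      unfold lam
      repeat' apply add_nonneg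
      all_goals apply ite_nn
      all_goals first
        | exact le_min (h0 _ _ (by decide)) (h0 _ _ (by decide))
        | exact sub_nonneg.mpr (min_le_left _ _)
        | exact sub_nonneg.mpr (min_le_right _ _)
        | exact sub_nonneg.mpr (max_le hcd_ad hcd_bd)
        | exact sub_nonneg.mpr (max_le hdc_ac hdc_bc)
        | exact sub_nonneg.mpr (max_le hab_cb hab_db)
        | exact sub_nonneg.mpr (max_le hba_ca hba_da)
    · intro f hf
      unfold lam
      have n1 : f ≠ mkf .d .d .d .d := fun he => hf (he ▸ mono_of_dec _ (by decide))
      have n2 : f ≠ mkf .d .b .d .d := fun he => hf (he ▸ mono_of_dec _ (by decide))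
      have n3 : f ≠ mkf .a .d .d .d := fun he => hf (he ▸ mono_of_dec _ (by decide))
      have n4 : f ≠ mkf .a .b .d .d := fun he => hf (he ▸ mono_of_dec _ (by decide))
      have n5 : f ≠ mkf .c .c .c .c := fun he => hf (he ▸ mono_of_dec _ (by decide))
      have n6 : f ≠ mkf .c .b .c .c := fun he => hf (he ▸ mono_of_dec _ (by decide))
      have n7 : f ≠ mkf .a .c .c .c := fun he => hf (he ▸ mono_of_dec _ (by decide))
      have n8 : f ≠ mkf .a .b .c .c := fun he => hf (he ▸ mono_of_dec _ (by decide))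
      have n9 : f ≠ mkf .b .b .b .b := fun he => hf (he ▸ mono_of_dec _ (by decide))
      have n10 : f ≠ mkf .b .b .b .d := fun he => hf (he ▸ mono_of_dec _ (by decide))
      have n11 : f ≠ mkf .b .b .c .b := fun he => hf (he ▸ mono_of_dec _ (by decide))
      have n12 : f ≠ mkf .b .b .c .d := fun he => hf (he ▸ mono_of_dec _ (by decide))
      have n13 : f ≠ mkf .a .a .a .a := fun he => hf (he ▸ mono_of_dec _ (by decide))
      have n14 : f ≠ mkf .a .a .a .d := fun he => hf (he ▸ mono_of_dec _ (by decide))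
      have n15 : f ≠ mkf .a .a .c .a := fun he => hf (he ▸ mono_of_dec _ (by decide))
      have n16 : f ≠ mkf .a .a .c .d := fun he => hf (he ▸ mono_of_dec _ (by decide))
      simp only [if_neg n1, if_neg n2, if_neg n3, if_neg n4, if_neg n5, if_neg n6, if_neg n7,
        if_neg n8, if_neg n9, if_neg n10, if_neg n11, if_neg n12, if_neg n13, if_neg n14,
        if_neg n15, if_neg n16, add_zero]
  · rintro ⟨Lam, hL0, hLm, hL⟩
    constructor
    · intro x y hxy
      rw [hL x y hxy]
      refine Finset.sum_nonneg fun f _ => mul_nonneg (hL0 f) ?_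
      unfold Ivec
      split_ifs <;> norm_num
    · intro Γ hΓ x y
      have hL' : ∀ (u v : B), u ≠ v → L u v = ∑ f : B → B, Lam f * Ivec f u v :=
        fun u v h => (hL u v h).trans (sum_univ_congr' _ _ _)
      have key : dotW L Γ x y = ∑ f : B → B, Lam f * dotW (Ivec f) Γ x y := by
        simp only [dotW, Finset.mul_sum]
        rw [Finset.sum_comm]
        refine Finset.sum_congr rfl fun p hp => ?_
        have hne : p.1 ≠ p.2 := by
          simp only [Finset.mem_filter] at hp; exact hp.2
        rw [hL' p.1 p.2 hne, Finset.sum_mul]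
        exact Finset.sum_congr rfl fun f _ => mul_assoc _ _ _
      rw [key]
      refine Finset.sum_nonneg fun f _ => ?_
      by_cases hmf : Monotone f
      · exact mul_nonneg (hL0 f) (dotW_Ivec_nonneg f hmf Γ hΓ x y)
      · simp [hLm f hmf]
end

section
/- On a finite linearly ordered set S, every generator L ∈ (R⁺)^{S₂} satisfying the monotonicity inequalities ⟨L, W^{Γ,x,y}⟩ ≥ 0 for all up-sets Γ and all x, y ∈ S can be written as a nonnegative linear combination of the vectors I_f over increasing functions f : S → S (i.e., monotonicity implies complete monotonicity on chains). -/
open Finset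
open scoped Classical

section MonCmonAux

set_option linter.unusedSectionVars false

variable {S : Type*} [Fintype S] [LinearOrder S]

lemma Wvec_case1 {Γ : Finset S} {x y v z : S} (hxy : x ≤ y) (hy : y ∉ Γ) (hne : x ≠ y) :
    Wvec Γ x y v z = (if v = y ∧ z ∈ Γ then (1:ℝ) else 0) - (if v = x ∧ z ∈ Γ then 1 else 0) := by
  unfold Wvec
  by_cases h1 : v = y ∧ z ∈ Γ
  · rw [if_pos (Or.inl ⟨hxy, hy, h1.1, h1.2⟩), if_pos h1,
      if_neg (fun h => hne (h1.1 ▸ h.1.symm))]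
    ring
  · rw [if_neg ?_, if_neg h1]
    · by_cases h2 : v = x ∧ z ∈ Γ
      · rw [if_pos (Or.inl ⟨hxy, hy, h2.1, h2.2⟩), if_pos h2]; ring
      · rw [if_neg ?_, if_neg h2]
        · ring
        · rintro (⟨-, -, hv, hz⟩ | ⟨-, hyΓ, -, -⟩)
          · exact h2 ⟨hv, hz⟩
          · exact hy hyΓ
    · rintro (⟨-, -, hv, hz⟩ | ⟨-, hyΓ, -, -⟩)
      · exact h1 ⟨hv, hz⟩
      · exact hy hyΓ

lemma Wvec_case2 {Γ : Finset S} {x y v z : S} (hyx : y ≤ x) (hy : y ∈ Γ) (hne : x ≠ y) :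
    Wvec Γ x y v z = (if v = y ∧ z ∉ Γ then (1:ℝ) else 0) - (if v = x ∧ z ∉ Γ then 1 else 0) := by
  have hxy : ¬ (x ≤ y) := fun h => hne (le_antisymm h hyx)
  unfold Wvec
  by_cases h1 : v = y ∧ z ∉ Γ
  · rw [if_pos (Or.inr ⟨hyx, hy, h1.1, h1.2⟩), if_pos h1,
      if_neg (fun h => hne (h1.1 ▸ h.1.symm))]
    ring
  · rw [if_neg ?_, if_neg h1]
    · by_cases h2 : v = x ∧ z ∉ Γ
      · rw [if_pos (Or.inr ⟨hyx, hy, h2.1, h2.2⟩), if_pos h2]; ring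
      · rw [if_neg ?_, if_neg h2]
        · ring
        · rintro (⟨hle, -, -, -⟩ | ⟨-, -, hv, hz⟩)
          · exact hxy hle
          · exact h2 ⟨hv, hz⟩
    · rintro (⟨hle, -, -, -⟩ | ⟨-, -, hv, hz⟩)
      · exact hxy hle
      · exact h1 ⟨hv, hz⟩

lemma sum_ind (L : S → S → ℝ) (a : S) (Γ : Finset S) :
    ∑ v : S, ∑ z : S, (if v = a ∧ z ∈ Γ then L v z else 0) = ∑ z ∈ Γ, L a z := by
  simp [ite_and, Finset.sum_ite_eq', Finset.sum_ite_mem]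

lemma dotW_eval1 (L : S → S → ℝ) {Γ : Finset S} {x y : S}
    (hxy : x ≤ y) (hyΓ : y ∉ Γ) (hxΓ : x ∉ Γ) (hne : x ≠ y) :
    dotW L Γ x y = ∑ z ∈ Γ, L y z - ∑ z ∈ Γ, L x z := by
  unfold dotW
  rw [Finset.sum_filter, Fintype.sum_prod_type]
  have : ∀ v z : S, (if v ≠ z then L v z * Wvec Γ x y v z else 0)
      = (if v = y ∧ z ∈ Γ then L v z else 0) - (if v = x ∧ z ∈ Γ then L v z else 0) := by
    intro v z
    by_cases hvz : v = z
    · subst hvz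
      rw [if_neg (by simp), if_neg (fun h : v = y ∧ v ∈ Γ => hyΓ (h.1 ▸ h.2)),
        if_neg (fun h : v = x ∧ v ∈ Γ => hxΓ (h.1 ▸ h.2))]
      ring
    · rw [if_pos hvz, Wvec_case1 hxy hyΓ hne]
      by_cases h1 : v = y ∧ z ∈ Γ <;> by_cases h2 : v = x ∧ z ∈ Γ
      · exact absurd (h1.1.symm.trans h2.1 : y = x) (Ne.symm hne)
      all_goals simp [h1, h2, hne, Ne.symm hne]
  simp only [this, Finset.sum_sub_distrib]
  rw [sum_ind L y Γ, sum_ind L x Γ]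

lemma dotW_eval2 (L : S → S → ℝ) {Γ : Finset S} {x y : S}
    (hyx : y ≤ x) (hyΓ : y ∈ Γ) (hxΓ : x ∈ Γ) (hne : x ≠ y) :
    dotW L Γ x y = ∑ z ∈ Γᶜ, L y z - ∑ z ∈ Γᶜ, L x z := by
  unfold dotW
  rw [Finset.sum_filter, Fintype.sum_prod_type]
  have : ∀ v z : S, (if v ≠ z then L v z * Wvec Γ x y v z else 0)
      = (if v = y ∧ z ∈ Γᶜ then L v z else 0) - (if v = x ∧ z ∈ Γᶜ then L v z else 0) := by
    intro v z
    have hmem : ∀ w : S, w ∈ Γᶜ ↔ w ∉ Γ := fun w => Finset.mem_compl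
    by_cases hvz : v = z
    · subst hvz
      rw [if_neg (by simp), if_neg (fun h : v = y ∧ v ∈ Γᶜ => (hmem v).1 h.2 (h.1 ▸ hyΓ)),
        if_neg (fun h : v = x ∧ v ∈ Γᶜ => (hmem v).1 h.2 (h.1 ▸ hxΓ))]
      ring
    · rw [if_pos hvz, Wvec_case2 hyx hyΓ hne]
      by_cases h1 : v = y ∧ z ∉ Γ <;> by_cases h2 : v = x ∧ z ∉ Γ
      · exact absurd (h1.1.symm.trans h2.1 : y = x) (Ne.symm hne)
      all_goals simp [h1, h2, hmem, hne, Ne.symm hne]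
  simp only [this, Finset.sum_sub_distrib]
  rw [sum_ind L y Γᶜ, sum_ind L x Γᶜ]

/-! The coupled jump kernel: add diagonal mass so every row has total mass `Mtot L`. -/

noncomputable def Rrow (L : S → S → ℝ) (x : S) : ℝ := ∑ z ∈ univ.erase x, L x z
noncomputable def Mtot (L : S → S → ℝ) : ℝ := 1 + ∑ x, Rrow L x
noncomputable def muK (L : S → S → ℝ) (x y : S) : ℝ :=
  if y = x then Mtot L - Rrow L x else L x y
noncomputable def cpf (L : S → S → ℝ) (x y : S) : ℝ := ∑ z ∈ univ.filter (· ≤ y), muK L x z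
noncomputable def Cpf (L : S → S → ℝ) (x y : S) : ℝ := ∑ z ∈ univ.filter (· < y), muK L x z

variable {L : S → S → ℝ}

lemma Rrow_nonneg (hL : ∀ x y : S, x ≠ y → 0 ≤ L x y) (x : S) : 0 ≤ Rrow L x :=
  Finset.sum_nonneg fun z hz => hL x z (Ne.symm (Finset.ne_of_mem_erase hz))

lemma Rrow_le (hL : ∀ x y : S, x ≠ y → 0 ≤ L x y) (x : S) : Rrow L x ≤ Mtot L := by
  have h1 : Rrow L x ≤ ∑ x, Rrow L x :=
    Finset.single_le_sum (fun z _ => Rrow_nonneg hL z) (Finset.mem_univ x)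
  rw [Mtot]; linarith

lemma two_Rrow_le (hL : ∀ x y : S, x ≠ y → 0 ≤ L x y) {x x' : S} (h : x ≠ x') :
    Rrow L x + Rrow L x' ≤ Mtot L := by
  have h1 : ∑ z ∈ ({x, x'} : Finset S), Rrow L z ≤ ∑ z, Rrow L z :=
    Finset.sum_le_sum_of_subset_of_nonneg (Finset.subset_univ _)
      (fun z _ _ => Rrow_nonneg hL z)
  rw [Finset.sum_pair h] at h1
  rw [Mtot]; linarith

lemma muK_nonneg (hL : ∀ x y : S, x ≠ y → 0 ≤ L x y) (x y : S) : 0 ≤ muK L x y := by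
  by_cases h : y = x
  · rw [muK, if_pos h]
    have := Rrow_le hL x; linarith
  · rw [muK, if_neg h]
    exact hL x y (Ne.symm h)

lemma sum_muK (L : S → S → ℝ) (x : S) : ∑ z, muK L x z = Mtot L := by
  rw [← Finset.add_sum_erase _ _ (Finset.mem_univ x)]
  have h1 : ∑ z ∈ univ.erase x, muK L x z = Rrow L x := by
    apply Finset.sum_congr rfl
    intro z hz
    rw [muK, if_neg (Finset.ne_of_mem_erase hz)]
  rw [h1, muK, if_pos rfl]
  ring

lemma cpf_le_Mtot (hL : ∀ x y : S, x ≠ y → 0 ≤ L x y) (x s : S) : cpf L x s ≤ Mtot L := by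
  rw [← sum_muK L x]
  exact Finset.sum_le_sum_of_subset_of_nonneg (Finset.subset_univ _)
    (fun z _ _ => muK_nonneg hL x z)

lemma Cpf_nonneg (hL : ∀ x y : S, x ≠ y → 0 ≤ L x y) (x y : S) : 0 ≤ Cpf L x y :=
  Finset.sum_nonneg fun z _ => muK_nonneg hL x z

lemma Cpf_add_muK (L : S → S → ℝ) (x y : S) : Cpf L x y + muK L x y = cpf L x y := by
  rw [cpf, Cpf]
  have h1 : univ.filter (· ≤ y) = insert y (univ.filter (· < y)) := by
    ext z
    simp only [Finset.mem_filter, Finset.mem_univ, true_and, Finset.mem_insert]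
    constructor
    · intro h; rcases eq_or_lt_of_le h with h | h
      · exact Or.inl h
      · exact Or.inr h
    · rintro (h | h)
      · exact le_of_eq h
      · exact le_of_lt h
  rw [h1, Finset.sum_insert (by simp)]
  ring

lemma cpf_le_Cpf_of_lt (hL : ∀ x y : S, x ≠ y → 0 ≤ L x y) {x : S} {s y : S} (h : s < y) :
    cpf L x s ≤ Cpf L x y := by
  apply Finset.sum_le_sum_of_subset_of_nonneg
  · intro z hz
    simp only [Finset.mem_filter, Finset.mem_univ, true_and] at *
    exact lt_of_le_of_lt hz h
  · exact fun z _ _ => muK_nonneg hL x z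

lemma sum_split_gamma (L : S → S → ℝ) (x s : S) :
    cpf L x s + ∑ z ∈ univ.filter (s < ·), muK L x z = Mtot L := by
  rw [← sum_muK L x, cpf]
  rw [← Finset.sum_filter_add_sum_filter_not univ (· ≤ s) (muK L x)]
  congr 1
  apply Finset.sum_congr _ (fun _ _ => rfl)
  ext z
  simp [not_le]

lemma sum_muK_eq_L {x : S} {A : Finset S} (hx : x ∉ A) :
    ∑ z ∈ A, muK L x z = ∑ z ∈ A, L x z :=
  Finset.sum_congr rfl fun z hz => by rw [muK, if_neg (fun h : z = x => hx (h ▸ hz))]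

lemma sum_le_Rrow (hL : ∀ x y : S, x ≠ y → 0 ≤ L x y) {x : S} {A : Finset S} (hx : x ∉ A) :
    ∑ z ∈ A, L x z ≤ Rrow L x := by
  apply Finset.sum_le_sum_of_subset_of_nonneg
  · intro z hz
    exact Finset.mem_erase.2 ⟨fun h => hx (h ▸ hz), Finset.mem_univ z⟩
  · intro z hz hz2
    exact hL x z (Ne.symm (Finset.ne_of_mem_erase hz))

lemma gamma_upset (s : S) : IsUpSet (univ.filter (s < ·)) := by
  intro a b ha hab
  simp only [Finset.mem_filter, Finset.mem_univ, true_and] at *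
  exact lt_of_lt_of_le ha hab

lemma compl_gamma (s : S) : (univ.filter (s < ·) : Finset S)ᶜ = univ.filter (· ≤ s) := by
  ext z; simp [not_lt]

/-- The key consequence of monotonicity: the coupled CDF is antitone in the state. -/
lemma cpf_anti (hL : IsMonGen L) {x x' : S} (hxx : x ≤ x') (s : S) :
    cpf L x' s ≤ cpf L x s := by
  rcases eq_or_lt_of_le hxx with rfl | hlt
  · exact le_refl _
  have hne : x ≠ x' := ne_of_lt hlt
  set Γ : Finset S := univ.filter (s < ·) with hΓ
  have hsplit := sum_split_gamma L x s
  have hsplit' := sum_split_gamma L x' s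
  have hmem : ∀ w : S, w ∈ Γ ↔ s < w := by intro w; simp [hΓ]
  by_cases hx' : x' ≤ s
  · have hxΓ : x ∉ Γ := fun h => absurd ((hmem x).1 h) (not_lt.2 (le_trans hxx hx'))
    have hx'Γ : x' ∉ Γ := fun h => absurd ((hmem x').1 h) (not_lt.2 hx')
    have hd := hL.2 Γ (gamma_upset s) x x'
    rw [dotW_eval1 L hxx hx'Γ hxΓ hne] at hd
    rw [sum_muK_eq_L hxΓ] at hsplit
    rw [sum_muK_eq_L hx'Γ] at hsplit'
    linarith
  · push_neg at hx'
    by_cases hx : s < x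
    · have hxΓ : x ∈ Γ := (hmem x).2 hx
      have hx'Γ : x' ∈ Γ := (hmem x').2 (lt_trans hx hlt)
      have hd := hL.2 Γ (gamma_upset s) x' x
      rw [dotW_eval2 L hxx hxΓ hx'Γ (Ne.symm hne), compl_gamma s] at hd
      have e1 : cpf L x s = ∑ z ∈ univ.filter (· ≤ s), L x z := by
        rw [cpf]; exact sum_muK_eq_L (by simp [not_le.2 hx])
      have e2 : cpf L x' s = ∑ z ∈ univ.filter (· ≤ s), L x' z := by
        rw [cpf]; exact sum_muK_eq_L (by simp [not_le.2 (lt_trans hx hlt)])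
      linarith
    · push_neg at hx
      have hxΓ : x ∉ Γ := by simp [hΓ, not_lt.2 hx]
      have e1 : ∑ z ∈ Γ, muK L x z = ∑ z ∈ Γ, L x z := sum_muK_eq_L hxΓ
      have e2 : cpf L x' s = ∑ z ∈ univ.filter (· ≤ s), L x' z := by
        rw [cpf]; exact sum_muK_eq_L (by simp [not_le.2 hx'])
      have b1 : ∑ z ∈ Γ, L x z ≤ Rrow L x := sum_le_Rrow hL.1 hxΓ
      have b2 : ∑ z ∈ univ.filter (· ≤ s), L x' z ≤ Rrow L x' :=
        sum_le_Rrow hL.1 (by simp [not_le.2 hx'])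
      have b3 := two_Rrow_le hL.1 hne
      linarith

variable [Nonempty S]

/-- The quantile coupling: `Fq L t` is the `t`-th quantile function of the rows. -/
noncomputable def Fq (L : S → S → ℝ) (t : ℝ) (x : S) : S :=
  if h : (univ.filter (fun s => t < cpf L x s)).Nonempty then
    (univ.filter (fun s => t < cpf L x s)).min' h
  else Classical.arbitrary S

lemma Fq_filter_nonempty {t : ℝ} (ht' : t < Mtot L) (x : S) :
    (univ.filter (fun s => t < cpf L x s)).Nonempty := by
  have hu : (univ : Finset S).Nonempty := Finset.univ_nonempty
  set s₀ := (univ : Finset S).max' hu with hs₀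
  have h1 : univ.filter (· ≤ s₀) = (univ : Finset S) := by
    ext z; simp [Finset.le_max' univ z (Finset.mem_univ z)]; exact Finset.le_max' univ z (Finset.mem_univ z)
  have h2 : cpf L x s₀ = Mtot L := by rw [cpf, h1, sum_muK]
  exact ⟨s₀, by simp [h2, ht']⟩

lemma Fq_mono (hL : IsMonGen L) {t : ℝ} (ht' : t < Mtot L) : Monotone (Fq L t) := by
  intro x x' hxx
  rw [Fq, dif_pos (Fq_filter_nonempty ht' x), Fq, dif_pos (Fq_filter_nonempty ht' x')]
  apply Finset.min'_le
  have h := Finset.min'_mem _ (Fq_filter_nonempty ht' x')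
  simp only [Finset.mem_filter, Finset.mem_univ, true_and] at h ⊢
  exact lt_of_lt_of_le h (cpf_anti hL hxx _)

lemma Fq_eq_iff (hL : IsMonGen L) {t : ℝ} (ht : 0 ≤ t) (ht' : t < Mtot L) (x y : S) :
    Fq L t x = y ↔ Cpf L x y ≤ t ∧ t < cpf L x y := by
  have hne := Fq_filter_nonempty (L := L) ht' x
  rw [Fq, dif_pos hne]
  constructor
  · intro h
    have hy : y ∈ univ.filter (fun s => t < cpf L x s) := h ▸ Finset.min'_mem _ hne
    have h2 : t < cpf L x y := (Finset.mem_filter.1 hy).2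
    refine ⟨?_, h2⟩
    by_contra hC
    push_neg at hC
    by_cases hP : (univ.filter (· < y) : Finset S).Nonempty
    · set s := (univ.filter (· < y) : Finset S).max' hP with hs
      have hsy : s < y :=
        (Finset.mem_filter.1 ((univ.filter (· < y)).max'_mem hP)).2
      have he : (univ.filter (· ≤ s) : Finset S) = univ.filter (· < y) := by
        ext z; simp only [Finset.mem_filter, Finset.mem_univ, true_and]
        exact ⟨fun hz => lt_of_le_of_lt hz hsy,
          fun hz => Finset.le_max' _ z (by simp [hz])⟩
      have hcs : cpf L x s = Cpf L x y := by rw [cpf, Cpf, he]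
      have hsmem : s ∈ univ.filter (fun s => t < cpf L x s) := by
        simp only [Finset.mem_filter, Finset.mem_univ, true_and, hcs]
        exact hC
      have hle := Finset.min'_le _ s hsmem
      rw [h] at hle
      exact absurd hle (not_le.2 hsy)
    · have h0 : Cpf L x y = 0 := by
        rw [Cpf, Finset.not_nonempty_iff_eq_empty.1 hP, Finset.sum_empty]
      linarith
  · rintro ⟨h1, h2⟩
    have hy : y ∈ univ.filter (fun s => t < cpf L x s) := by
      simp only [Finset.mem_filter, Finset.mem_univ, true_and]; exact h2
    have hmin := Finset.min'_le _ y hy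
    rcases eq_or_lt_of_le hmin with h | h
    · exact h
    · exfalso
      have hm : t < cpf L x ((univ.filter (fun s => t < cpf L x s)).min' hne) :=
        (Finset.mem_filter.1 (Finset.min'_mem _ hne)).2
      have := cpf_le_Cpf_of_lt hL.1 (x := x) h
      linarith

lemma Fq_set_eq (hL : IsMonGen L) (x y : S) :
    {t : ℝ | t ∈ Set.Ico 0 (Mtot L) ∧ Fq L t x = y} = Set.Ico (Cpf L x y) (cpf L x y) := by
  ext t
  simp only [Set.mem_setOf_eq, Set.mem_Ico]
  constructor
  · rintro ⟨⟨ht0, htM⟩, hF⟩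
    exact (Fq_eq_iff hL ht0 htM x y).1 hF
  · rintro ⟨h1, h2⟩
    have ht0 : (0:ℝ) ≤ t := le_trans (Cpf_nonneg hL.1 x y) h1
    have htM : t < Mtot L := lt_of_lt_of_le h2 (cpf_le_Mtot hL.1 x y)
    exact ⟨⟨ht0, htM⟩, (Fq_eq_iff hL ht0 htM x y).2 ⟨h1, h2⟩⟩

end MonCmonAux

/-- on a finite linearly ordered set, monotonicity implies
complete monotonicity. -/
theorem mon_implies_cmon_on_chain {S : Type*} [Fintype S] [LinearOrder S]
    (L : S → S → ℝ) (hL : IsMonGen L) : IsCMonGen L := by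
  rcases isEmpty_or_nonempty S with h | h
  · exact ⟨0, fun f => le_refl 0, fun f _ => rfl, fun x => (IsEmpty.false x).elim⟩
  set A : (S → S) → Set ℝ := fun f => {t : ℝ | t ∈ Set.Ico 0 (Mtot L) ∧ Fq L t = f} with hA
  have hL1 := hL.1
  have A_eq : ∀ f : S → S, A f = ⋂ x : S, Set.Ico (Cpf L x (f x)) (cpf L x (f x)) := by
    intro f
    ext t
    simp only [hA, Set.mem_setOf_eq, Set.mem_iInter]
    constructor
    · rintro ⟨hI, hF⟩ x
      have hx : t ∈ {t : ℝ | t ∈ Set.Ico 0 (Mtot L) ∧ Fq L t x = f x} := ⟨hI, congrFun hF x⟩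
      rw [Fq_set_eq hL x (f x)] at hx; exact hx
    · intro hx
      have x₀ : S := Classical.arbitrary S
      have h₀ : t ∈ Set.Ico (0:ℝ) (Mtot L) := by
        have h1 := hx x₀
        rw [← Fq_set_eq hL x₀ (f x₀)] at h1
        exact h1.1
      refine ⟨h₀, funext fun x => ?_⟩
      have h1 := hx x
      rw [← Fq_set_eq hL x (f x)] at h1
      exact h1.2
  have A_meas : ∀ f : S → S, MeasurableSet (A f) := fun f => by
    rw [A_eq f]; exact MeasurableSet.iInter fun x => measurableSet_Ico
  have A_subset : ∀ f : S → S, A f ⊆ Set.Ico 0 (Mtot L) := fun f t ht => ht.1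
  have A_ne_top : ∀ f : S → S, MeasureTheory.volume (A f) ≠ ⊤ := by
    intro f
    have h1 : MeasureTheory.volume (A f) ≤ MeasureTheory.volume (Set.Ico (0:ℝ) (Mtot L)) :=
      MeasureTheory.measure_mono (A_subset f)
    exact ne_top_of_le_ne_top (by rw [Real.volume_Ico]; exact ENNReal.ofReal_ne_top) h1
  refine ⟨fun f => (MeasureTheory.volume (A f)).toReal, fun f => ENNReal.toReal_nonneg, ?_, ?_⟩
  · intro f hf
    have hempty : A f = ∅ := by
      ext t
      simp only [hA, Set.mem_setOf_eq, Set.mem_empty_iff_false, iff_false]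
      rintro ⟨⟨ht0, htM⟩, hF⟩
      exact hf (hF ▸ Fq_mono hL htM)
    simp only [hempty, MeasureTheory.measure_empty, ENNReal.toReal_zero]
  · intro x y hxy
    have main : L x y = ∑ f : S → S, (MeasureTheory.volume (A f)).toReal * Ivec f x y := ?_
    · convert main using 2
      exact congrArg (fun i : Fintype (S → S) => @Finset.univ _ i) (Subsingleton.elim _ _)
    have step1 : ∑ f : S → S, (MeasureTheory.volume (A f)).toReal * Ivec f x y
        = ∑ f ∈ univ.filter (fun f : S → S => f x = y), (MeasureTheory.volume (A f)).toReal := by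
      rw [Finset.sum_filter]
      apply Finset.sum_congr rfl
      intro f _
      rw [Ivec]
      by_cases hfx : f x = y <;> simp [hfx]
    have hdisj : (↑(univ.filter (fun f : S → S => f x = y)) : Set (S → S)).PairwiseDisjoint A := by
      intro f hf g hg hfg
      refine Set.disjoint_left.2 fun t htf htg => hfg ?_
      exact htf.2.symm.trans htg.2
    have hunion : ⋃ f ∈ univ.filter (fun f : S → S => f x = y), A f
        = Set.Ico (Cpf L x y) (cpf L x y) := by
      rw [← Fq_set_eq hL x y]
      ext t
      simp only [Set.mem_iUnion, Set.mem_setOf_eq, Finset.mem_filter, Finset.mem_univ,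
        true_and, hA]
      constructor
      · rintro ⟨f, hfx, hI, hF⟩
        exact ⟨hI, (congrFun hF x).trans hfx⟩
      · rintro ⟨hI, hF⟩
        exact ⟨Fq L t, hF, hI, rfl⟩
    have hsum := MeasureTheory.measure_biUnion_finset (μ := MeasureTheory.volume) hdisj (fun f _ => A_meas f)
    rw [hunion] at hsum
    have hnn : 0 ≤ muK L x y := muK_nonneg hL1 x y
    have hCc := Cpf_add_muK L x y
    have hmL : muK L x y = L x y := by rw [muK, if_neg (Ne.symm hxy)]
    have key : (MeasureTheory.volume (Set.Ico (Cpf L x y) (cpf L x y))).toReal = L x y := by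
      rw [Real.volume_Ico, ENNReal.toReal_ofReal (by linarith)]
      linarith
    rw [step1, ← ENNReal.toReal_sum (fun f _ => A_ne_top f), ← hsum, key]
end
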